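/- The number of rotation-equivalence classes of aperiodic binary words of length n with exactly d ones is (1/n) Σ_{j | gcd(n,d)} μ(j) C(n/j, d/j), where μ is the Möbius function. -/

import Mathlib

/-- Cyclic shift by `k` positions of a binary word of length `n`. -/
def cshift {n : ℕ} (u : Fin n → Bool) (k : ℕ) : Fin n → Bool :=
  fun i => u ⟨((i : ℕ) + k) % n, Nat.mod_lt _ i.pos⟩

/-- Density of a binary word: number of positions equal to `1`. -/
def density {n : ℕ} (u : Fin n → Bool) : ℕ :=
  (Finset.univ.filter (fun i => u i = true)).card

/-- A word is aperiodic if no nontrivial cyclic shift fixes it. -/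
def Aperiodic {n : ℕ} (u : Fin n → Bool) : Prop :=
  ∀ k, k < n → 0 < k → cshift u k ≠ u

/-- Orbit (set of all cyclic shifts) of a binary word. -/
def orbitF {n : ℕ} (u : Fin n → Bool) : Finset (Fin n → Bool) :=
  Finset.univ.image (fun k : Fin n => cshift u k)

-- Number of rotation classes of aperiodic binary words of length `n` and density `d`.
open Classical in
noncomputable def LyndonCount (n d : ℕ) : ℕ :=
  ((Finset.univ.filter (fun u : Fin n → Bool => Aperiodic u ∧ density u = d)).image orbitF).card

-- Number of rotation classes of binary words of length `n` and density `d`.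
open Classical in
noncomputable def NecklaceCount (n d : ℕ) : ℕ :=
  ((Finset.univ.filter (fun u : Fin n → Bool => density u = d)).image orbitF).card

namespace LyndonAux

variable {n : ℕ}

lemma cshift_eqv (u : Fin n → Bool) (k : ℕ) (i : Fin n) {m : ℕ} (hm : m < n)
    (h : ((i : ℕ) + k) % n = m) : cshift u k i = u ⟨m, hm⟩ := by
  unfold cshift; congr 1; exact Fin.ext h

lemma cshift_cshift (u : Fin n → Bool) (a b : ℕ) :
    cshift (cshift u a) b = cshift u (b + a) := by
  funext i
  show cshift u a ⟨((i : ℕ) + b) % n, Nat.mod_lt _ i.pos⟩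
      = u ⟨((i : ℕ) + (b + a)) % n, Nat.mod_lt _ i.pos⟩
  exact cshift_eqv u a _ _ (by rw [Nat.mod_add_mod, Nat.add_assoc])

lemma cshift_zero (u : Fin n → Bool) : cshift u 0 = u := by
  funext i
  exact cshift_eqv u 0 i i.isLt (by simp [Nat.mod_eq_of_lt i.isLt])

lemma cshift_mod (u : Fin n → Bool) (k : ℕ) : cshift u k = cshift u (k % n) := by
  funext i
  refine cshift_eqv u k i (Nat.mod_lt _ i.pos) ?_
  simp [Nat.add_mod]

lemma cshift_n (u : Fin n → Bool) : cshift u n = u := by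
  funext i
  exact cshift_eqv u n i i.isLt (by simp [Nat.mod_eq_of_lt i.isLt])

lemma cshift_mul_n (u : Fin n → Bool) (q : ℕ) : cshift u (q * n) = u := by
  induction q with
  | zero => simpa using cshift_zero u
  | succ q ih =>
      have : cshift u ((q + 1) * n) = cshift (cshift u n) (q * n) := by
        rw [cshift_cshift]; ring_nf
      rw [this, cshift_n, ih]

lemma cshift_cancel (hn : 0 < n) (u : Fin n → Bool) (k : ℕ) :
    cshift (cshift u k) (n - k % n) = u := by
  rw [cshift_cshift]
  have h : n - k % n + k = k / n * n + n := by
    have h1 : n * (k / n) + k % n = k := Nat.div_add_mod k n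
    have h3 : n * (k / n) = k / n * n := Nat.mul_comm _ _
    have h2 : k % n < n := Nat.mod_lt _ hn
    omega
  rw [h, ← cshift_cshift, cshift_n, cshift_mul_n]

lemma cshift_left_injective (hn : 0 < n) (k : ℕ) :
    Function.Injective (fun u : Fin n → Bool => cshift u k) := by
  intro u v h
  have := congrArg (fun w => cshift w (n - k % n)) h
  simpa [cshift_cancel hn] using this

/-- A word of period `k` has period `k % n`, etc.: if `cshift u a = cshift u b` with
`a ≤ b`, then `cshift u (b - a) = u`. -/
lemma cshift_diff {u : Fin n → Bool} (hn : 0 < n) {a b : ℕ} (hab : a ≤ b)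
    (h : cshift u a = cshift u b) : cshift u (b - a) = u := by
  have h2 := congrArg (fun w => cshift w (n - a % n)) h
  rw [cshift_cancel hn] at h2
  rw [cshift_cshift] at h2
  have hma : a % n < n := Nat.mod_lt _ hn
  have key : n - a % n + b = (b - a) + (a / n * n + n) := by
    have h1 : n * (a / n) + a % n = a := Nat.div_add_mod a n
    have h3 : n * (a / n) = a / n * n := Nat.mul_comm _ _
    omega
  have inner : cshift u (a / n * n + n) = u := by
    rw [← cshift_cshift, cshift_n, cshift_mul_n]
  rw [key, ← cshift_cshift, inner] at h2
  exact h2.symm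

lemma aperiodic_shift_inj {u : Fin n → Bool} (hn : 0 < n) (hu : Aperiodic u) :
    Function.Injective (fun k : Fin n => cshift u k) := by
  have main : ∀ a b : Fin n, a ≤ b → cshift u (a : ℕ) = cshift u (b : ℕ) → a = b := by
    intro a b hab h
    have := cshift_diff hn hab h
    by_contra hne
    have hpos : 0 < (b : ℕ) - (a : ℕ) := by
      have : (a : ℕ) ≠ (b : ℕ) := fun hh => hne (Fin.ext hh)
      omega
    exact hu _ (by omega) hpos this
  intro a b h
  rcases le_total a b with hab | hab
  · exact main a b hab h
  · exact (main b a hab h.symm).symm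

open Fin.NatCast in
lemma density_cshift (hn : 0 < n) (u : Fin n → Bool) (k : ℕ) :
    density (cshift u k) = density u := by
  classical
  haveI : NeZero n := ⟨hn.ne'⟩
  have hfun : ∀ i : Fin n, cshift u k i = u (i + (k : Fin n)) := by
    intro i
    refine cshift_eqv u k i (i + (k : Fin n)).isLt ?_
    rw [Fin.add_def]
    simp [Fin.val_natCast, Nat.add_mod, Nat.mod_eq_of_lt i.isLt]
  unfold density
  refine Finset.card_bij (fun a _ => a + (k : Fin n)) ?_ ?_ ?_
  · intro a ha
    simp only [Finset.mem_filter, Finset.mem_univ, true_and] at ha ⊢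
    rw [hfun] at ha; exact ha
  · intro a _ b _ hab
    exact add_right_cancel hab
  · intro b hb
    refine ⟨b - (k : Fin n), ?_, by simp⟩
    simp only [Finset.mem_filter, Finset.mem_univ, true_and] at hb ⊢
    rw [hfun, sub_add_cancel]; exact hb

lemma aperiodic_cshift {u : Fin n → Bool} (hn : 0 < n) (hu : Aperiodic u) (k : ℕ) :
    Aperiodic (cshift u k) := by
  intro m hm hm0 h
  rw [cshift_cshift] at h
  have : cshift (cshift u m) k = cshift u k := by
    rw [cshift_cshift, Nat.add_comm k m, h]
  have h2 : cshift u m = u := cshift_left_injective hn k this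
  exact hu m hm hm0 h2

lemma mem_orbitF {u w : Fin n → Bool} : w ∈ orbitF u ↔ ∃ k : Fin n, cshift u k = w := by
  simp [orbitF]

lemma self_mem_orbitF (hn : 0 < n) (u : Fin n → Bool) : u ∈ orbitF u :=
  mem_orbitF.mpr ⟨⟨0, hn⟩, by simpa using cshift_zero u⟩

lemma orbitF_cshift_subset (hn : 0 < n) (u : Fin n → Bool) (k : ℕ) :
    orbitF (cshift u k) ⊆ orbitF u := by
  intro w hw
  rcases mem_orbitF.mp hw with ⟨m, hm⟩
  refine mem_orbitF.mpr ⟨⟨((m : ℕ) + k) % n, Nat.mod_lt _ hn⟩, ?_⟩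
  rw [← hm, cshift_cshift]
  exact (cshift_mod u _).symm

lemma orbitF_cshift (hn : 0 < n) (u : Fin n → Bool) (k : ℕ) :
    orbitF (cshift u k) = orbitF u := by
  refine le_antisymm (orbitF_cshift_subset hn u k) ?_
  have : u = cshift (cshift u k) (n - k % n) := (cshift_cancel hn u k).symm
  calc orbitF u = orbitF (cshift (cshift u k) (n - k % n)) := by rw [← this]
    _ ⊆ orbitF (cshift u k) := orbitF_cshift_subset hn _ _

lemma card_orbitF {u : Fin n → Bool} (hn : 0 < n) (hu : Aperiodic u) :
    (orbitF u).card = n := by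
  unfold orbitF
  rw [Finset.card_image_of_injective _ (aperiodic_shift_inj hn hu)]
  simp

section MinPer

/-- The minimal positive period of a word. -/
noncomputable def minPer (hn : 0 < n) (u : Fin n → Bool) : ℕ :=
  Nat.find (⟨n, hn, cshift_n u⟩ : ∃ k, 0 < k ∧ cshift u k = u)

lemma minPer_pos (hn : 0 < n) (u : Fin n → Bool) : 0 < minPer hn u :=
  (Nat.find_spec (⟨n, hn, cshift_n u⟩ : ∃ k, 0 < k ∧ cshift u k = u)).1

lemma cshift_minPer (hn : 0 < n) (u : Fin n → Bool) : cshift u (minPer hn u) = u :=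
  (Nat.find_spec (⟨n, hn, cshift_n u⟩ : ∃ k, 0 < k ∧ cshift u k = u)).2

lemma minPer_le (hn : 0 < n) {u : Fin n → Bool} {k : ℕ} (hk : 0 < k)
    (h : cshift u k = u) : minPer hn u ≤ k :=
  Nat.find_min' _ ⟨hk, h⟩

lemma cshift_mul_period {u : Fin n → Bool} {m : ℕ} (h : cshift u m = u) (q : ℕ) :
    cshift u (q * m) = u := by
  induction q with
  | zero => simpa using cshift_zero u
  | succ q ih =>
      have : cshift u ((q + 1) * m) = cshift (cshift u m) (q * m) := by
        rw [cshift_cshift]; ring_nf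
      rw [this, h, ih]

lemma minPer_dvd (hn : 0 < n) {u : Fin n → Bool} {k : ℕ} (h : cshift u k = u) :
    minPer hn u ∣ k := by
  set m := minPer hn u with hm
  have hmpos : 0 < m := minPer_pos hn u
  have hstep : cshift u (k % m) = u := by
    have h1 : cshift (cshift u (k / m * m)) (k % m) = cshift u k := by
      rw [cshift_cshift, Nat.add_comm, Nat.div_add_mod']
    rw [cshift_mul_period (cshift_minPer hn u) (k / m)] at h1
    rw [h1, h]
  by_contra hdvd
  have hkm : 0 < k % m := Nat.pos_of_ne_zero (fun hz => hdvd (Nat.dvd_of_mod_eq_zero hz))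
  have h1 := minPer_le hn hkm hstep
  have h2 := Nat.mod_lt k hmpos
  omega

lemma minPer_dvd_n (hn : 0 < n) (u : Fin n → Bool) : minPer hn u ∣ n :=
  minPer_dvd hn (cshift_n u)

end MinPer

section Rep

lemma v_congr {e : ℕ} (v : Fin e → Bool) {a b : ℕ} (ha : a < e) (hb : b < e)
    (h : a = b) : v ⟨a, ha⟩ = v ⟨b, hb⟩ := by subst h; rfl

/-- Repeat a word of length `e` to length `n`. -/
def rep (n : ℕ) {e : ℕ} (he : 0 < e) (v : Fin e → Bool) : Fin n → Bool :=
  fun i => v ⟨(i : ℕ) % e, Nat.mod_lt _ he⟩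

/-- First `e` letters of a word. -/
def blk {e : ℕ} (u : Fin n → Bool) (hen : e ≤ n) : Fin e → Bool :=
  fun i => u ⟨(i : ℕ), lt_of_lt_of_le i.isLt hen⟩

lemma rep_injective (n : ℕ) {e : ℕ} (he : 0 < e) (hen : e ≤ n) :
    Function.Injective (fun v : Fin e → Bool => rep n he v) := by
  intro v w h
  funext i
  have := congrFun h ⟨(i : ℕ), lt_of_lt_of_le i.isLt hen⟩
  show v i = w i
  have hv : (⟨(i : ℕ) % e, Nat.mod_lt _ he⟩ : Fin e) = i :=
    Fin.ext (Nat.mod_eq_of_lt i.isLt)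
  simpa [rep, hv] using this

lemma u_mod_eq (hn : 0 < n) {e : ℕ} (he : 0 < e) (hen : e ∣ n) {u : Fin n → Bool}
    (h : cshift u e = u) :
    ∀ j (hj : j < n), u ⟨j, hj⟩ =
      u ⟨j % e, lt_of_lt_of_le (Nat.mod_lt _ he) (Nat.le_of_dvd hn hen)⟩ := by
  intro j
  induction j using Nat.strong_induction_on with
  | _ j ih =>
    intro hj
    by_cases hje : j < e
    · congr 1
      exact Fin.ext (Nat.mod_eq_of_lt hje).symm
    · push_neg at hje
      have hj' : j - e < n := by omega
      have step : u ⟨j, hj⟩ = u ⟨j - e, hj'⟩ := by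
        have hc := congrFun h ⟨j - e, hj'⟩
        have h2 : (j - e + e) % n = j := by
          rw [Nat.sub_add_cancel hje, Nat.mod_eq_of_lt hj]
        rw [cshift_eqv u e ⟨j - e, hj'⟩ hj h2] at hc
        exact hc
      rw [step, ih (j - e) (by omega) hj']
      congr 1
      refine Fin.ext ?_
      show (j - e) % e = j % e
      conv_rhs => rw [← Nat.sub_add_cancel hje]
      rw [Nat.add_mod_right]

lemma rep_blk (hn : 0 < n) {e : ℕ} (he : 0 < e) (hen : e ∣ n) {u : Fin n → Bool}
    (h : cshift u e = u) :
    rep n he (blk u (Nat.le_of_dvd hn hen)) = u := by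
  funext i
  have := u_mod_eq hn he hen h (i : ℕ) i.isLt
  show u ⟨(i : ℕ) % e, _⟩ = u i
  exact this.symm

lemma cshift_rep (n : ℕ) {e : ℕ} (he : 0 < e) (hen : e ∣ n) (v : Fin e → Bool) :
    cshift (rep n he v) e = rep n he v := by
  funext i
  show v ⟨(((i : ℕ) + e) % n) % e, _⟩ = v ⟨(i : ℕ) % e, _⟩
  exact v_congr v _ _ (by rw [Nat.mod_mod_of_dvd _ hen, Nat.add_mod_right])

lemma rep_period {e m : ℕ} (he : 0 < e) (hen : e ∣ n) (v : Fin e → Bool)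
    (hm : cshift v m = v) : cshift (rep n he v) m = rep n he v := by
  funext i
  show v ⟨(((i : ℕ) + m) % n) % e, _⟩ = v ⟨(i : ℕ) % e, _⟩
  have h1 : ((i : ℕ) + m) % n % e = ((i : ℕ) % e + m) % e := by
    rw [Nat.mod_mod_of_dvd _ hen, Nat.mod_add_mod]
  have h2 := congrFun hm ⟨(i : ℕ) % e, Nat.mod_lt _ he⟩
  calc v ⟨((i : ℕ) + m) % n % e, _⟩
      = v ⟨((i : ℕ) % e + m) % e, Nat.mod_lt _ he⟩ := v_congr v _ _ h1
    _ = v ⟨(i : ℕ) % e, Nat.mod_lt _ he⟩ := h2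

lemma blk_period (hn : 0 < n) {e m : ℕ} (he : 0 < e) (hen : e ∣ n) (v : Fin e → Bool)
    (h : cshift (rep n he v) m = rep n he v) : cshift v m = v := by
  have hen' : e ≤ n := Nat.le_of_dvd hn hen
  funext i
  have h2 := congrFun h ⟨(i : ℕ), lt_of_lt_of_le i.isLt hen'⟩
  show v ⟨((i : ℕ) + m) % e, _⟩ = v i
  calc v ⟨((i : ℕ) + m) % e, Nat.mod_lt _ he⟩
      = v ⟨((i : ℕ) + m) % n % e, Nat.mod_lt _ he⟩ :=
        v_congr v _ _ (by rw [Nat.mod_mod_of_dvd _ hen])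
    _ = v ⟨(i : ℕ) % e, Nat.mod_lt _ he⟩ := h2
    _ = v i := v_congr v _ i.isLt (Nat.mod_eq_of_lt i.isLt)

lemma density_rep (n : ℕ) {e : ℕ} (he : 0 < e) (hen : e ∣ n) (v : Fin e → Bool) :
    density (rep n he v) = (n / e) * density v := by
  classical
  set g : ℕ → ℕ := fun j => if v ⟨j % e, Nat.mod_lt _ he⟩ = true then 1 else 0 with hg
  have hstep1 : density (rep n he v) = ∑ j ∈ Finset.range n, g j := by
    unfold density
    rw [Finset.card_filter]
    exact Fin.sum_univ_eq_sum_range g n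
  have hstep3 : density v = ∑ j ∈ Finset.range e, g j := by
    unfold density
    rw [Finset.card_filter]
    have : ∀ i : Fin e, (if v i = true then 1 else 0) = g (i : ℕ) := by
      intro i
      have hv : (⟨(i : ℕ) % e, Nat.mod_lt _ he⟩ : Fin e) = i :=
        Fin.ext (Nat.mod_eq_of_lt i.isLt)
      simp [hg, hv]
    rw [Finset.sum_congr rfl (fun i _ => this i)]
    exact Fin.sum_univ_eq_sum_range g e
  have hstep2 : ∀ m : ℕ, ∑ j ∈ Finset.range (m * e), g j = m * ∑ j ∈ Finset.range e, g j := by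
    intro m
    induction m with
    | zero => simp
    | succ m ih =>
        have : (m + 1) * e = m * e + e := by ring
        rw [this, Finset.sum_range_add, ih]
        have : ∀ x, g (m * e + x) = g x := by
          intro x
          show (if v ⟨(m * e + x) % e, Nat.mod_lt _ he⟩ = true then 1 else 0)
              = (if v ⟨x % e, Nat.mod_lt _ he⟩ = true then 1 else 0)
          rw [v_congr v _ _ (by rw [Nat.add_comm, Nat.add_mul_mod_self_right] :
            (m * e + x) % e = x % e)]
        rw [Finset.sum_congr rfl (fun x _ => this x)]
        ring
  rw [hstep1, hstep3, ← hstep2 (n / e), Nat.div_mul_cancel hen]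

end Rep

section Counting

open Classical in
/-- The number of aperiodic words of length `N` and density `D`. -/
noncomputable def Acount (N D : ℕ) : ℕ :=
  (Finset.univ.filter (fun u : Fin N → Bool => Aperiodic u ∧ density u = D)).card

open Classical in
lemma mul_lyndonCount (n d : ℕ) (hn : 0 < n) :
    n * LyndonCount n d = Acount n d := by
  classical
  unfold LyndonCount Acount
  set s := Finset.univ.filter (fun u : Fin n → Bool => Aperiodic u ∧ density u = d) with hs
  have H : ∀ u ∈ s, orbitF u ∈ s.image orbitF := fun u hu => Finset.mem_image_of_mem _ hu
  rw [Finset.card_eq_sum_card_fiberwise H]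
  have key : ∀ O ∈ s.image orbitF, (s.filter (fun u => orbitF u = O)).card = n := by
    intro O hO
    rcases Finset.mem_image.mp hO with ⟨u, hu, huO⟩
    have huap : Aperiodic u := ((Finset.mem_filter.mp hu).2).1
    have hud : density u = d := ((Finset.mem_filter.mp hu).2).2
    have hfib : s.filter (fun w => orbitF w = O) = orbitF u := by
      ext w
      constructor
      · intro hw
        rcases Finset.mem_filter.mp hw with ⟨hws, hwO⟩
        have : w ∈ orbitF w := self_mem_orbitF hn w
        rw [hwO, ← huO] at this
        exact this
      · intro hw
        rcases mem_orbitF.mp hw with ⟨k, hk⟩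
        refine Finset.mem_filter.mpr ⟨?_, ?_⟩
        · refine Finset.mem_filter.mpr ⟨Finset.mem_univ _, ?_, ?_⟩
          · rw [← hk]; exact aperiodic_cshift hn huap _
          · rw [← hk, density_cshift hn]; exact hud
        · rw [← hk, orbitF_cshift hn, huO]
    rw [hfib]
    exact card_orbitF hn huap
  rw [Finset.sum_congr rfl key, Finset.sum_const, smul_eq_mul, Nat.mul_comm]

open Classical in
lemma card_density_eq_choose (N D : ℕ) :
    (Finset.univ.filter (fun u : Fin N → Bool => density u = D)).card = N.choose D := by
  classical
  have key : (Finset.univ.filter (fun u : Fin N → Bool => density u = D)).card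
      = (Finset.powersetCard D (Finset.univ : Finset (Fin N))).card := by
    refine Finset.card_bij' (fun u _ => Finset.univ.filter (fun i => u i = true))
      (fun s _ => fun i => decide (i ∈ s)) ?_ ?_ ?_ ?_
    · intro u hu
      rw [Finset.mem_powersetCard]
      exact ⟨Finset.subset_univ _, (Finset.mem_filter.mp hu).2⟩
    · intro t ht
      refine Finset.mem_filter.mpr ⟨Finset.mem_univ _, ?_⟩
      show density (fun i => decide (i ∈ t)) = D
      unfold density
      have htt : (Finset.univ.filter (fun i : Fin N => decide (i ∈ t) = true)) = t := by
        ext i; simp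
      rw [htt]
      exact (Finset.mem_powersetCard.mp ht).2
    · intro u hu
      funext i
      by_cases h : u i <;> simp [h]
    · intro t ht
      ext i; simp
  rw [key, Finset.card_powersetCard, Finset.card_univ, Fintype.card_fin]

open Classical in
lemma choose_eq_sum_Acount (N D : ℕ) (hN : 0 < N) :
    N.choose D = ∑ j ∈ (Nat.gcd N D).divisors, Acount (N / j) (D / j) := by
  classical
  rw [← card_density_eq_choose N D]
  set s := Finset.univ.filter (fun u : Fin N → Bool => density u = D) with hs
  have H : ∀ u ∈ s, N / minPer hN u ∈ (Nat.gcd N D).divisors := by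
    intro u hu
    have hud : density u = D := (Finset.mem_filter.mp hu).2
    have hed : minPer hN u ∣ N := minPer_dvd_n hN u
    have hep : 0 < minPer hN u := minPer_pos hN u
    have hper : cshift u (minPer hN u) = u := cshift_minPer hN u
    have hrep := rep_blk hN hep hed hper
    have hdens : (N / minPer hN u) * density (blk u (Nat.le_of_dvd hN hed)) = D := by
      rw [← density_rep N hep hed, hrep, hud]
    refine Nat.mem_divisors.mpr ⟨Nat.dvd_gcd (Nat.div_dvd_of_dvd hed) ⟨_, hdens.symm⟩, ?_⟩
    exact (Nat.gcd_pos_of_pos_left D hN).ne'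
  rw [Finset.card_eq_sum_card_fiberwise H]
  refine Finset.sum_congr rfl ?_
  intro j hj
  unfold Acount
  have hjg : j ∣ Nat.gcd N D := (Nat.mem_divisors.mp hj).1
  have hjN : j ∣ N := hjg.trans (Nat.gcd_dvd_left N D)
  have hjD : j ∣ D := hjg.trans (Nat.gcd_dvd_right N D)
  have hjpos : 0 < j := Nat.pos_of_mem_divisors hj
  set e := N / j with he
  have hed : e ∣ N := Nat.div_dvd_of_dvd hjN
  have hep : 0 < e := Nat.div_pos (Nat.le_of_dvd hN hjN) hjpos
  have heN : e ≤ N := Nat.le_of_dvd hN hed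
  have hNe : N / e = j := Nat.div_div_self hjN hN.ne'
  refine Finset.card_bij' (fun u _ => blk u heN) (fun v _ => rep N hep v) ?_ ?_ ?_ ?_
  · -- forward map lands in target
    intro u hu
    obtain ⟨hus, huj⟩ := Finset.mem_filter.mp hu
    have hud : density u = D := (Finset.mem_filter.mp hus).2
    have hmdvd : minPer hN u ∣ N := minPer_dvd_n hN u
    have hme : minPer hN u = e := by
      rw [he, ← huj, Nat.div_div_self hmdvd hN.ne']
    have hper : cshift u e = u := hme ▸ cshift_minPer hN u
    have hrep : rep N hep (blk u heN) = u := rep_blk hN hep hed hper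
    refine Finset.mem_filter.mpr ⟨Finset.mem_univ _, ?_, ?_⟩
    · intro k hk hk0 hcon
      have hper2 := rep_period hep hed (blk u heN) hcon
      rw [hrep] at hper2
      have := minPer_le hN hk0 hper2
      omega
    · have hDj : (N / e) * density (blk u heN) = D := by
        rw [← density_rep N hep hed, hrep, hud]
      rw [← hDj, hNe, Nat.mul_div_cancel_left _ hjpos]
  · -- backward map lands in fiber
    intro v hv
    obtain ⟨-, hvAp, hvd⟩ := Finset.mem_filter.mp hv
    have hpe : cshift (rep N hep v) e = rep N hep v := cshift_rep N hep hed v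
    have hdvd : minPer hN (rep N hep v) ∣ e := minPer_dvd hN hpe
    have hm : minPer hN (rep N hep v) = e := by
      have hle : minPer hN (rep N hep v) ≤ e := Nat.le_of_dvd hep hdvd
      rcases Nat.lt_or_ge (minPer hN (rep N hep v)) e with hlt | hge
      · exfalso
        have hvper : cshift v (minPer hN (rep N hep v)) = v :=
          blk_period hN hep hed v (cshift_minPer hN (rep N hep v))
        exact hvAp _ hlt (minPer_pos hN _) hvper
      · omega
    refine Finset.mem_filter.mpr ⟨?_, ?_⟩
    · refine Finset.mem_filter.mpr ⟨Finset.mem_univ _, ?_⟩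
      rw [density_rep N hep hed, hvd, hNe, Nat.mul_div_cancel' hjD]
    · rw [hm, hNe]
  · -- left inverse
    intro u hu
    obtain ⟨hus, huj⟩ := Finset.mem_filter.mp hu
    have hmdvd : minPer hN u ∣ N := minPer_dvd_n hN u
    have hme : minPer hN u = e := by
      rw [he, ← huj, Nat.div_div_self hmdvd hN.ne']
    have hper : cshift u e = u := hme ▸ cshift_minPer hN u
    exact rep_blk hN hep hed hper
  · -- right inverse
    intro v _
    funext i
    show v ⟨(i : ℕ) % e, _⟩ = v i
    exact v_congr v _ i.isLt (Nat.mod_eq_of_lt i.isLt)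

end Counting

end LyndonAux

/-- The number of rotation classes of aperiodic binary words of length `n` with density `d`
satisfies `n · L(n,d) = Σ_{j ∣ gcd(n,d)} μ(j) · C(n/j, d/j)`. -/
theorem lyndon_count_formula (n d : ℕ) (hn : 0 < n) :
    (n : ℤ) * LyndonCount n d =
      ∑ j ∈ (Nat.gcd n d).divisors,
        ArithmeticFunction.moebius j * (Nat.choose (n / j) (d / j) : ℤ) := by
  classical
  open LyndonAux in
  set g := Nat.gcd n d with hgdef
  have hgn : g ∣ n := Nat.gcd_dvd_left n d
  have hgd : g ∣ d := Nat.gcd_dvd_right n d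
  have hg : 0 < g := Nat.gcd_pos_of_pos_left d hn
  set n' := n / g with hn'def
  set d' := d / g with hd'def
  have hgn' : g * n' = n := Nat.mul_div_cancel' hgn
  have hgd' : g * d' = d := Nat.mul_div_cancel' hgd
  have hn'pos : 0 < n' := Nat.div_pos (Nat.le_of_dvd hn hgn) hg
  have hcop : Nat.Coprime n' d' := Nat.coprime_div_gcd_div_gcd hg
  have hdivdiv : ∀ {m a j : ℕ}, j ∣ m → m * a / j = m / j * a := by
    intro m a j hj
    rw [Nat.mul_comm m a, Nat.mul_div_assoc a hj, Nat.mul_comm]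
  have hFGn : ∀ m, 0 < m → ∑ i ∈ m.divisors, Acount (i * n') (i * d')
      = (m * n').choose (m * d') := by
    intro m hm
    have hNpos : 0 < m * n' := Nat.mul_pos hm hn'pos
    have hgcd : Nat.gcd (m * n') (m * d') = m := by
      rw [Nat.gcd_mul_left, hcop, Nat.mul_one]
    have h1 := LyndonAux.choose_eq_sum_Acount (m * n') (m * d') hNpos
    rw [hgcd] at h1
    have h2 : ∑ j ∈ m.divisors, Acount (m * n' / j) (m * d' / j)
        = ∑ j ∈ m.divisors, Acount (m / j * n') (m / j * d') := by
      refine Finset.sum_congr rfl fun j hj => ?_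
      have hjm : j ∣ m := (Nat.mem_divisors.mp hj).1
      rw [hdivdiv hjm, hdivdiv hjm]
    have h3 := Nat.sum_div_divisors m (fun x => Acount (x * n') (x * d'))
    rw [h1, h2, ← h3]
  have hFGZ : ∀ m, 0 < m → ∑ i ∈ m.divisors, ((Acount (i * n') (i * d') : ℕ) : ℤ)
      = (((m * n').choose (m * d') : ℕ) : ℤ) := by
    intro m hm
    exact_mod_cast congrArg (Nat.cast : ℕ → ℤ) (hFGn m hm)
  have key := (ArithmeticFunction.sum_eq_iff_sum_smul_moebius_eq
      (f := fun i => ((Acount (i * n') (i * d') : ℕ) : ℤ))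
      (g := fun m => (((m * n').choose (m * d') : ℕ) : ℤ))).mp hFGZ g hg
  rw [Nat.sum_divisorsAntidiagonal
      (fun i j => ArithmeticFunction.moebius i • (((j * n').choose (j * d') : ℕ) : ℤ))] at key
  have hterm : ∀ j ∈ g.divisors,
      ArithmeticFunction.moebius j • (((g / j * n').choose (g / j * d') : ℕ) : ℤ)
        = ArithmeticFunction.moebius j * ((n / j).choose (d / j) : ℤ) := by
    intro j hj
    have hjg : j ∣ g := (Nat.mem_divisors.mp hj).1
    rw [← hdivdiv hjg, ← hdivdiv hjg, hgn', hgd', smul_eq_mul]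
  rw [Finset.sum_congr rfl hterm, hgn', hgd'] at key
  calc (n : ℤ) * LyndonCount n d
      = ((n * LyndonCount n d : ℕ) : ℤ) := by push_cast; ring
    _ = ((Acount n d : ℕ) : ℤ) := by rw [LyndonAux.mul_lyndonCount n d hn]
    _ = ∑ j ∈ g.divisors,
        ArithmeticFunction.moebius j * ((n / j).choose (d / j) : ℤ) := key.symm
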